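/- arXiv:1912.11898 — 2 statements merged into one kernel-verified Lean document; each statement's English description precedes it below -/
import Mathlib

section
/- Let Fₙ be the free group on x₁, …, xₙ, with Rᵢ the transposition automorphism and Sᵢ the Artin automorphism as above. Then for 1 ≤ i ≤ n−2: S_{i+1} ∘ Sᵢ ∘ R_{i+1} = Rᵢ ∘ S_{i+1} ∘ Sᵢ. -/
/-- The free group `Fₙ` on generators `x₀, …, x_{n-1}` (0-based indexing). -/
abbrev FG (n : ℕ) := FreeGroup (Fin n)

/-- The generator `xᵢ`. -/
def X {n : ℕ} (i : Fin n) : FG n := FreeGroup.of i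

def fin0 (n i : ℕ) (h : i + 1 < n) : Fin n := ⟨i, Nat.lt_of_succ_lt h⟩
def fin1 (n i : ℕ) (h : i + 1 < n) : Fin n := ⟨i + 1, h⟩

/-- The Artin automorphism `Sᵢ : xᵢ ↦ x_{i+1}, x_{i+1} ↦ x_{i+1}⁻¹ xᵢ x_{i+1}`,
fixing the other generators. -/
def ArtinS (n i : ℕ) (h : i + 1 < n) : FG n →* FG n :=
  FreeGroup.lift fun j =>
    if (j : ℕ) = i then X (fin1 n i h)
    else if (j : ℕ) = i + 1 then (X (fin1 n i h))⁻¹ * X (fin0 n i h) * X (fin1 n i h)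
    else X j

/-- The transposition automorphism `Rᵢ : xᵢ ↔ x_{i+1}`, fixing the other generators. -/
def PermR (n i : ℕ) (h : i + 1 < n) : FG n →* FG n :=
  FreeGroup.lift fun j =>
    if (j : ℕ) = i then X (fin1 n i h)
    else if (j : ℕ) = i + 1 then X (fin0 n i h)
    else X j

/-- The inversion automorphism `Tᵢ : xᵢ ↦ xᵢ⁻¹`, fixing the other generators. -/
def InvT (n i : ℕ) (h : i < n) : FG n →* FG n :=
  FreeGroup.lift fun j => if (j : ℕ) = i then (X (⟨i, h⟩ : Fin n))⁻¹ else X j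

/-- mixed relation `S_{i+1} ∘ Sᵢ ∘ R_{i+1} = Rᵢ ∘ S_{i+1} ∘ Sᵢ`. -/
theorem artin_mixed_relation_SSR (n i : ℕ) (h2 : i + 2 < n) (h1 : i + 1 < n) :
    (ArtinS n (i + 1) h2).comp ((ArtinS n i h1).comp (PermR n (i + 1) h2)) =
      (PermR n i h1).comp ((ArtinS n (i + 1) h2).comp (ArtinS n i h1)) := by
  apply FreeGroup.ext_hom
  intro j
  simp only [MonoidHom.comp_apply]
  have e1 : i ≠ i + 1 + 1 := by omega
  have e2 : i + 1 + 1 ≠ i := by omega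
  have e3 : i + 1 ≠ i := by omega
  have e4 : i ≠ i + 1 := by omega
  have e5 : i + 1 + 1 ≠ i + 1 := by omega
  have e6 : i + 1 ≠ i + 1 + 1 := by omega
  rcases eq_or_ne (j : ℕ) i with hj | hj
  · simp [ArtinS, PermR, X, fin0, fin1, hj, e1, e2, e3, e4, e5, e6]
  rcases eq_or_ne (j : ℕ) (i+1) with hj1 | hj1
  · simp [ArtinS, PermR, X, fin0, fin1, hj1, hj, e1, e2, e3, e4, e5, e6]
  rcases eq_or_ne (j : ℕ) (i+2) with hj2 | hj2
  · simp [ArtinS, PermR, X, fin0, fin1, hj2, hj, hj1, e1, e2, e3, e4, e5, e6]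
  · simp [ArtinS, PermR, X, fin0, fin1, hj, hj1, hj2, e1, e2, e3, e4, e5, e6]
end

section
/- With 𝒮ᵢ the lifted Artin automorphisms of the pair (Fₙ, Mₙ) as defined above, for 1 ≤ i ≤ n−2 the braid relation 𝒮ᵢ ∘ 𝒮_{i+1} ∘ 𝒮ᵢ = 𝒮_{i+1} ∘ 𝒮ᵢ ∘ 𝒮_{i+1} holds; in particular, the second components agree on each generator Kⱼ. -/
/-- The group ring `ℤ[Fₙ]`. -/
abbrev GR (n : ℕ) := MonoidAlgebra ℤ (FG n)
/-- The free `ℤ[Fₙ]`-module `Mₙ` on `K₀, …, K_{n-1}`. -/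
abbrev M (n : ℕ) := Fin n →₀ GR n

/-- The module generator `Kᵢ`. -/
noncomputable def K {n : ℕ} (i : Fin n) : M n := Finsupp.single i 1

/-- The action `g ▷ m` of `Fₙ` on `Mₙ`, via the `ℤ[Fₙ]`-module structure. -/
noncomputable def act {n : ℕ} (g : FG n) (m : M n) : M n :=
  (MonoidAlgebra.of ℤ (FG n) g) • m

/-- The additive endomorphism of `Mₙ`, semilinear over the group endomorphism `f1`
(i.e. `m ↦ g ▷ m` goes to `m ↦ f1 g ▷ m`), determined by the images `t i` of the
generators `K i`. -/
noncomputable def lift2 {n : ℕ} (f1 : FG n →* FG n) (t : Fin n → M n) : M n →+ M n :=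
  Finsupp.liftAddHom fun i =>
    { toFun := fun r => (MonoidAlgebra.mapDomainRingHom ℤ f1 r) • t i
      map_zero' := by simp
      map_add' := by intro a b; (try simp only []); rw [map_add, add_smul] }

/-- First component of the lifted Artin automorphism `𝒮ᵢ`. -/
def S1 (n i : ℕ) (h : i + 1 < n) : FG n →* FG n :=
  FreeGroup.lift fun j =>
    if (j : ℕ) = i then X (fin1 n i h)
    else if (j : ℕ) = i + 1 then (X (fin1 n i h))⁻¹ * X (fin0 n i h) * X (fin1 n i h)
    else X j

/-- Second component of the lifted Artin automorphism `𝒮ᵢ`: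
`Kᵢ ↦ Kᵢ + K_{i+1} − x_{i+1}⁻¹ ▷ Kᵢ`, `K_{i+1} ↦ x_{i+1}⁻¹ ▷ Kᵢ`, fixing other `Kⱼ`,
extended semilinearly over `𝒮ᵢ¹`. -/
noncomputable def S2 (n i : ℕ) (h : i + 1 < n) : M n →+ M n :=
  lift2 (S1 n i h) fun j =>
    if (j : ℕ) = i then
      K (fin0 n i h) + K (fin1 n i h) - act (X (fin1 n i h))⁻¹ (K (fin0 n i h))
    else if (j : ℕ) = i + 1 then act (X (fin1 n i h))⁻¹ (K (fin0 n i h))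
    else K j

/-- First component of the inverse `𝒮̄ᵢ`: `xᵢ ↦ xᵢ x_{i+1} xᵢ⁻¹`, `x_{i+1} ↦ xᵢ`. -/
def Sbar1 (n i : ℕ) (h : i + 1 < n) : FG n →* FG n :=
  FreeGroup.lift fun j =>
    if (j : ℕ) = i then X (fin0 n i h) * X (fin1 n i h) * (X (fin0 n i h))⁻¹
    else if (j : ℕ) = i + 1 then X (fin0 n i h)
    else X j

/-- Second component of the inverse `𝒮̄ᵢ`: `Kᵢ ↦ xᵢ ▷ K_{i+1}`,
`K_{i+1} ↦ Kᵢ + K_{i+1} − xᵢ ▷ K_{i+1}`, fixing other `Kⱼ`. -/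
noncomputable def Sbar2 (n i : ℕ) (h : i + 1 < n) : M n →+ M n :=
  lift2 (Sbar1 n i h) fun j =>
    if (j : ℕ) = i then act (X (fin0 n i h)) (K (fin1 n i h))
    else if (j : ℕ) = i + 1 then
      K (fin0 n i h) + K (fin1 n i h) - act (X (fin0 n i h)) (K (fin1 n i h))
    else K j

/-- First component of the transposition automorphism `ℛᵢ`. -/
def R1 (n i : ℕ) (h : i + 1 < n) : FG n →* FG n :=
  FreeGroup.lift fun j =>
    if (j : ℕ) = i then X (fin1 n i h)
    else if (j : ℕ) = i + 1 then X (fin0 n i h)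
    else X j

/-- Second component of `ℛᵢ`: swaps `Kᵢ` and `K_{i+1}`, fixing other `Kⱼ`. -/
noncomputable def R2 (n i : ℕ) (h : i + 1 < n) : M n →+ M n :=
  lift2 (R1 n i h) fun j =>
    if (j : ℕ) = i then K (fin1 n i h)
    else if (j : ℕ) = i + 1 then K (fin0 n i h)
    else K j

/-- First component of the inversion automorphism `𝒯ᵢ`: `xᵢ ↦ xᵢ⁻¹`. -/
def T1 (n i : ℕ) (h : i < n) : FG n →* FG n :=
  FreeGroup.lift fun j => if (j : ℕ) = i then (X (⟨i, h⟩ : Fin n))⁻¹ else X j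

/-- Second component of `𝒯ᵢ`: fixes each `Kⱼ`, extended semilinearly over `𝒯ᵢ¹`. -/
noncomputable def T2 (n i : ℕ) (h : i < n) : M n →+ M n :=
  lift2 (T1 n i h) fun j => K j


section BraidAux

lemma lift2_single {n : ℕ} (f1 : FG n →* FG n) (t : Fin n → M n) (j : Fin n) (r : GR n) :
    lift2 f1 t (Finsupp.single j r) = (MonoidAlgebra.mapDomainRingHom ℤ f1 r) • t j :=
  Finsupp.liftAddHom_apply_single _ _ _

lemma lift2_smul {n : ℕ} (f1 : FG n →* FG n) (t : Fin n → M n) (r : GR n) (m : M n) :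
    lift2 f1 t (r • m) = (MonoidAlgebra.mapDomainRingHom ℤ f1 r) • lift2 f1 t m := by
  induction m using Finsupp.induction with
  | zero => simp
  | single_add j s m _ _ ih =>
    rw [smul_add, map_add, map_add, smul_add, ih, Finsupp.smul_single, lift2_single,
      lift2_single, smul_eq_mul, map_mul, mul_smul]

lemma lift2_K {n : ℕ} (f1 : FG n →* FG n) (t : Fin n → M n) (j : Fin n) :
    lift2 f1 t (K j) = t j := by
  rw [K, lift2_single, map_one, one_smul]

lemma lift2_act {n : ℕ} (f1 : FG n →* FG n) (t : Fin n → M n) (g : FG n) (m : M n) :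
    lift2 f1 t (act g m) = act (f1 g) (lift2 f1 t m) := by
  rw [act, act, lift2_smul]
  congr 1
  simp [MonoidAlgebra.of_apply, MonoidAlgebra.mapDomainRingHom, Finsupp.mapDomain_single]

lemma act_mul {n : ℕ} (g h : FG n) (m : M n) : act (g * h) m = act g (act h m) := by
  simp [act, MonoidAlgebra.of_apply, smul_smul, MonoidAlgebra.single_mul_single]

lemma act_add {n : ℕ} (g : FG n) (m1 m2 : M n) : act g (m1 + m2) = act g m1 + act g m2 := by
  simp [act, smul_add]

lemma act_sub {n : ℕ} (g : FG n) (m1 m2 : M n) : act g (m1 - m2) = act g m1 - act g m2 := by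
  simp [act, smul_sub]

lemma S1_of {n i : ℕ} (h : i + 1 < n) (j : Fin n) :
    S1 n i h (FreeGroup.of j) =
      if (j : ℕ) = i then X (fin1 n i h)
      else if (j : ℕ) = i + 1 then (X (fin1 n i h))⁻¹ * X (fin0 n i h) * X (fin1 n i h)
      else X j := by
  rw [S1]; exact FreeGroup.lift_apply_of

lemma S1_X {n i : ℕ} (h : i + 1 < n) (j : Fin n) :
    S1 n i h (X j) =
      if (j : ℕ) = i then X (fin1 n i h)
      else if (j : ℕ) = i + 1 then (X (fin1 n i h))⁻¹ * X (fin0 n i h) * X (fin1 n i h)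
      else X j := S1_of h j

lemma S2_K {n i : ℕ} (h : i + 1 < n) (j : Fin n) :
    S2 n i h (K j) =
      if (j : ℕ) = i then
        K (fin0 n i h) + K (fin1 n i h) - act (X (fin1 n i h))⁻¹ (K (fin0 n i h))
      else if (j : ℕ) = i + 1 then act (X (fin1 n i h))⁻¹ (K (fin0 n i h))
      else K j := by
  rw [S2, lift2_K]

lemma S2_act {n i : ℕ} (h : i + 1 < n) (g : FG n) (m : M n) :
    S2 n i h (act g m) = act (S1 n i h g) (S2 n i h m) := lift2_act _ _ _ _

lemma mdr_comp {n : ℕ} (f g : FG n →* FG n) (r : GR n) :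
    MonoidAlgebra.mapDomainRingHom ℤ f (MonoidAlgebra.mapDomainRingHom ℤ g r) =
      MonoidAlgebra.mapDomainRingHom ℤ (f.comp g) r := by
  simp [MonoidAlgebra.mapDomainRingHom_apply, MonoidHom.coe_comp, Finsupp.mapDomain_comp]

end BraidAux

/-- braid relation `𝒮ᵢ ∘ 𝒮_{i+1} ∘ 𝒮ᵢ = 𝒮_{i+1} ∘ 𝒮ᵢ ∘ 𝒮_{i+1}` for the
lifted Artin automorphisms of the pair `(Fₙ, Mₙ)`; in particular the second components
agree (on each generator `Kⱼ`, hence everywhere). -/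
theorem liftedArtin_braid (n i : ℕ) (h2 : i + 2 < n) (h1 : i + 1 < n) :
    (S1 n i h1).comp ((S1 n (i + 1) h2).comp (S1 n i h1)) =
      (S1 n (i + 1) h2).comp ((S1 n i h1).comp (S1 n (i + 1) h2)) ∧
    (S2 n i h1).comp ((S2 n (i + 1) h2).comp (S2 n i h1)) =
      (S2 n (i + 1) h2).comp ((S2 n i h1).comp (S2 n (i + 1) h2)) := by
  have a1 : ¬ i = i + 1 := by omega
  have a2 : ¬ i = i + 1 + 1 := by omega
  have a3 : ¬ i + 1 = i := by omega
  have a4 : ¬ i + 1 = i + 1 + 1 := by omega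
  have a5 : ¬ i + 1 + 1 = i := by omega
  have a6 : ¬ i + 1 + 1 = i + 1 := by omega
  have a7 : ¬ i + 2 = i := by omega
  have a8 : ¬ i + 2 = i + 1 := by omega
  have part1 : (S1 n i h1).comp ((S1 n (i + 1) h2).comp (S1 n i h1)) =
      (S1 n (i + 1) h2).comp ((S1 n i h1).comp (S1 n (i + 1) h2)) := by
    apply FreeGroup.ext_hom
    intro j
    simp only [MonoidHom.comp_apply]
    by_cases hj0 : (j : ℕ) = i
    · simp [S1_of, S1_X, hj0, fin0, fin1, a1, a2, a3, a4, a5, a6, a7, a8, map_mul, map_inv,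
        mul_assoc]
    · by_cases hj1 : (j : ℕ) = i + 1
      · simp [S1_of, S1_X, hj0, hj1, fin0, fin1, a1, a2, a3, a4, a5, a6, a7, a8, map_mul,
          map_inv, mul_assoc]
      · by_cases hj2 : (j : ℕ) = i + 2
        · simp [S1_of, S1_X, hj0, hj1, hj2, fin0, fin1, a1, a2, a3, a4, a5, a6, a7, a8,
            map_mul, map_inv, mul_assoc]
        · have hj2' : ¬ (j : ℕ) = i + 1 + 1 := by omega
          simp [S1_of, S1_X, hj0, hj1, hj2, hj2', fin0, fin1]
  refine ⟨part1, ?_⟩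
  apply Finsupp.addHom_ext
  intro j r
  have hr : (Finsupp.single j r : M n) = r • K j := by simp [K, Finsupp.smul_single]
  have hS2smul : ∀ (k : ℕ) (hk : k + 1 < n) (s : GR n) (m : M n),
      S2 n k hk (s • m) = (MonoidAlgebra.mapDomainRingHom ℤ (S1 n k hk) s) • S2 n k hk m :=
    fun k hk => lift2_smul _ _
  simp only [AddMonoidHom.comp_apply, hr, hS2smul]
  rw [mdr_comp, mdr_comp, mdr_comp, mdr_comp, MonoidHom.comp_assoc, MonoidHom.comp_assoc,
    part1]
  congr 1
  by_cases hj0 : (j : ℕ) = i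
  · simp [S2_K, S2_act, S1_X, map_add, map_sub, act_add, act_sub, ← act_mul, hj0, fin0, fin1,
      a1, a2, a3, a4, a5, a6, a7, a8, map_mul, map_inv, mul_assoc, mul_inv_rev,
      mul_inv_cancel_left, inv_mul_cancel_left]
    abel
  · by_cases hj1 : (j : ℕ) = i + 1
    · simp [S2_K, S2_act, S1_X, map_add, map_sub, act_add, act_sub, ← act_mul, hj0, hj1,
        fin0, fin1, a1, a2, a3, a4, a5, a6, a7, a8, map_mul, map_inv, mul_assoc, mul_inv_rev,
        mul_inv_cancel_left, inv_mul_cancel_left]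
    · by_cases hj2 : (j : ℕ) = i + 2
      · simp [S2_K, S2_act, S1_X, map_add, map_sub, act_add, act_sub, ← act_mul, hj0, hj1, hj2,
          fin0, fin1, a1, a2, a3, a4, a5, a6, a7, a8, map_mul, map_inv, mul_assoc, mul_inv_rev,
          mul_inv_cancel_left, inv_mul_cancel_left]
      · have hj2' : ¬ (j : ℕ) = i + 1 + 1 := by omega
        simp [S2_K, hj0, hj1, hj2, hj2', fin0, fin1]
end
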